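/- Let g ≥ 1 and let i, n be natural numbers with n ≥ i. Define P_n(t) ∈ ℚ[t] as the coefficient of x^n in the formal power series (1+xt)^{2g}/((1−x)(1−xt²)), viewed as a power series in x with coefficients in ℚ[t]. Then the coefficient of t^i in P_n(t) equals the coefficient of t^i in the formal power series (1+t)^{2g}/(1−t²) = (1+t)^{2g} · ∑_{m≥0} t^{2m} in ℚ⟦t⟧. -/

import Mathlib

open Polynomial PowerSeries

/-- Macdonald's Poincaré polynomial of the `n`-th symmetric product of a genus-`g` curve:
the coefficient of `x^n` in `(1+xt)^{2g}/((1−x)(1−xt²))`,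
viewed as a power series in `x` with coefficients in `ℚ[t]`. -/
noncomputable def macdonaldPoly (g n : ℕ) : ℚ[X] :=
  PowerSeries.coeff (R := ℚ[X]) n
    ((1 + PowerSeries.C (R := ℚ[X]) Polynomial.X * PowerSeries.X) ^ (2 * g)
      * PowerSeries.mk (fun _ => (1 : ℚ[X]))
      * PowerSeries.mk (fun m => (Polynomial.X : ℚ[X]) ^ (2 * m)))

lemma ps_coeff_one_add_X_pow (R : Type*) [CommSemiring R] (m a : ℕ) :
    PowerSeries.coeff (R := R) a ((1 + PowerSeries.X) ^ m) = (m.choose a : R) := by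
  have h : ((1 : R⟦X⟧) + PowerSeries.X) ^ m = (((1 + Polynomial.X) ^ m : R[X]) : R⟦X⟧) := by
    rw [Polynomial.coe_pow, Polynomial.coe_add, Polynomial.coe_one, Polynomial.coe_X]
  rw [h, Polynomial.coeff_coe, Polynomial.coeff_one_add_X_pow]

lemma coeffF (g a : ℕ) :
    PowerSeries.coeff (R := ℚ[X]) a
        ((1 + PowerSeries.C (R := ℚ[X]) Polynomial.X * PowerSeries.X) ^ (2 * g))
      = Polynomial.C (((2 * g).choose a : ℚ)) * Polynomial.X ^ a := by
  have h1 : (1 + PowerSeries.C (R := ℚ[X]) Polynomial.X * PowerSeries.X)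
      = rescale Polynomial.X (1 + PowerSeries.X) := by
    rw [map_add, map_one, rescale_X]
  rw [h1, ← map_pow, coeff_rescale, ps_coeff_one_add_X_pow, mul_comm]
  congr 1

lemma step1 (g n i : ℕ) (hn : i ≤ n) :
    (macdonaldPoly g n).coeff i
      = ∑ c ∈ Finset.range (n + 1),
          (if 2 * c ≤ i then (((2 * g).choose (i - 2 * c) : ℚ)) else 0) := by
  unfold macdonaldPoly
  rw [PowerSeries.coeff_mul, Finset.Nat.sum_antidiagonal_eq_sum_range_succ_mk]
  rw [Polynomial.finset_sum_coeff]
  rw [← Finset.sum_range_reflect]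
  refine Finset.sum_congr rfl fun c hc => ?_
  rw [Finset.mem_range] at hc
  have hcn : c ≤ n := by omega
  have h1 : n - (n - c) = c := by omega
  simp only [Nat.succ_sub_one, h1]
  rw [PowerSeries.coeff_mul, Finset.Nat.sum_antidiagonal_eq_sum_range_succ_mk]
  simp only [coeffF, PowerSeries.coeff_mk, mul_one]
  rw [Finset.sum_mul, Polynomial.finset_sum_coeff]
  have : ∀ a ∈ Finset.range (n - c + 1),
      (Polynomial.C (((2 * g).choose a : ℚ)) * Polynomial.X ^ a * Polynomial.X ^ (2 * c)).coeff i
        = if a + 2 * c = i then (((2 * g).choose a : ℚ)) else 0 := by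
    intro a _
    rw [mul_assoc, ← pow_add, Polynomial.coeff_C_mul, Polynomial.coeff_X_pow]
    simp [eq_comm]
  rw [Finset.sum_congr rfl this]
  by_cases h : 2 * c ≤ i
  · rw [if_pos h, Finset.sum_eq_single (i - 2 * c)]
    · rw [if_pos (by omega)]
    · intro b _ hb
      rw [if_neg (by omega)]
    · intro habs
      exact absurd (Finset.mem_range.2 (by omega)) habs
  · rw [if_neg h]
    exact Finset.sum_eq_zero fun x _ => if_neg (by omega)

lemma step2 (g i : ℕ) :
    PowerSeries.coeff (R := ℚ) i
        ((1 + PowerSeries.X) ^ (2 * g)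
          * PowerSeries.mk (fun j => if Even j then (1 : ℚ) else 0))
      = ∑ v ∈ Finset.range (i + 1),
          (if Even v then (((2 * g).choose (i - v) : ℚ)) else 0) := by
  rw [PowerSeries.coeff_mul, Finset.Nat.sum_antidiagonal_eq_sum_range_succ_mk,
    ← Finset.sum_range_reflect]
  refine Finset.sum_congr rfl fun v hv => ?_
  rw [Finset.mem_range] at hv
  simp only [Nat.succ_sub_one, PowerSeries.coeff_mk, ps_coeff_one_add_X_pow]
  have h2 : i - (i - v) = v := by omega
  rw [h2]
  by_cases h : Even v <;> simp [h]

lemma bij_sum (f : ℕ → ℚ) (i n : ℕ) (hn : i ≤ n) :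
    ∑ v ∈ Finset.range (i + 1), (if Even v then f v else 0)
      = ∑ c ∈ Finset.range (n + 1), (if 2 * c ≤ i then f (2 * c) else 0) := by
  rw [← Finset.sum_filter, ← Finset.sum_filter]
  refine Finset.sum_nbij' (fun v => v / 2) (fun c => 2 * c) ?_ ?_ ?_ ?_ ?_
  · intro v hv
    simp only [Finset.mem_filter, Finset.mem_range, Nat.even_iff] at hv ⊢
    omega
  · intro c hc
    simp only [Finset.mem_filter, Finset.mem_range, Nat.even_iff] at hc ⊢
    omega
  · intro v hv
    simp only [Finset.mem_filter, Finset.mem_range, Nat.even_iff] at hv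
    show 2 * (v / 2) = v
    omega
  · intro c hc
    show 2 * c / 2 = c
    omega
  · intro v hv
    simp only [Finset.mem_filter, Finset.mem_range, Nat.even_iff] at hv
    show f v = f (2 * (v / 2))
    congr 1
    omega


/-- Coefficientwise stabilization: for `g ≥ 1` and `n ≥ i`, the coefficient of `t^i` in
`P_n(t)` equals the coefficient of `t^i` in `(1+t)^{2g}/(1−t²) = (1+t)^{2g} · ∑_{m≥0} t^{2m}`
in `ℚ⟦t⟧`. -/
theorem symmetric_product_poincare_stabilizes (g i n : ℕ) (hg : 1 ≤ g) (hn : i ≤ n) :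
    (macdonaldPoly g n).coeff i
      = PowerSeries.coeff (R := ℚ) i
          ((1 + PowerSeries.X) ^ (2 * g)
            * PowerSeries.mk (fun j => if Even j then (1 : ℚ) else 0)) := by
  rw [step1 g n i hn, step2, bij_sum _ i n hn]
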